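/- Let V ∈ R^{k×k} be invertible and R the matrix whose j-th column is Ve_j/‖Ve_j‖₂. Then ‖R‖₂ ≤ κ(V), ‖R^{-1}‖₂ ≤ κ(V), and κ(R) ≤ κ(V)², where κ is the spectral condition number. -/

import Mathlib

/-- Euclidean norm of a vector in `ℝ^n`. -/
noncomputable def vnorm {n : ℕ} (v : Fin n → ℝ) : ℝ := Real.sqrt (∑ i, v i ^ 2)

/-- The `j`-th largest singular value (1-indexed) of a real `m × n` matrix, via the
Courant–Fischer max-min characterization.  In particular `sval A 1` is the spectral
norm `‖A‖₂` and `sval A k` is `σ_k(A)`. -/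
noncomputable def sval {m n : ℕ} (A : Matrix (Fin m) (Fin n) ℝ) (j : ℕ) : ℝ :=
  sSup {c : ℝ | 0 ≤ c ∧ ∃ W : Submodule ℝ (Fin n → ℝ), Module.finrank ℝ W = j ∧
    ∀ v ∈ W, c * vnorm v ≤ vnorm (A.mulVec v)}

/-- `U` is an `m × k` matrix of orthonormal columns spanning a top-`k` left singular
subspace of `A`: its columns are orthonormal eigenvectors of `A Aᵀ` whose eigenvalues
are (at least) `σ_k(A)²`, i.e. belong to the `k` largest. -/
def IsTopSingular {m n k : ℕ} (A : Matrix (Fin m) (Fin n) ℝ)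
    (U : Matrix (Fin m) (Fin k) ℝ) : Prop :=
  U.transpose * U = 1 ∧ ∃ D : Fin k → ℝ,
    A * A.transpose * U = U * Matrix.diagonal D ∧ ∀ j, sval A k ^ 2 ≤ D j

lemma vnorm_eq {n : ℕ} (v : Fin n → ℝ) :
    vnorm v = ‖(WithLp.equiv 2 (Fin n → ℝ)).symm v‖ := by
  simp [vnorm, EuclideanSpace.norm_eq, Real.norm_eq_abs, sq_abs]

lemma vnorm_nonneg {n : ℕ} (v : Fin n → ℝ) : 0 ≤ vnorm v := Real.sqrt_nonneg _

lemma vnorm_pos {n : ℕ} {v : Fin n → ℝ} (hv : v ≠ 0) : 0 < vnorm v := by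
  rw [vnorm_eq]
  simpa using hv

lemma vnorm_smul {n : ℕ} (t : ℝ) (v : Fin n → ℝ) : vnorm (t • v) = |t| * vnorm v := by
  rw [vnorm_eq, vnorm_eq]
  have : (WithLp.equiv 2 (Fin n → ℝ)).symm (t • v) = t • (WithLp.equiv 2 (Fin n → ℝ)).symm v := rfl
  rw [this, norm_smul, Real.norm_eq_abs]

lemma vnorm_single {n : ℕ} (j : Fin n) : vnorm (Pi.single j 1) = 1 := by
  rw [vnorm]
  rw [Finset.sum_eq_single j]
  · simp
  · intro b _ hb; simp [Pi.single_apply, hb]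
  · simp

lemma opBound_spec {m n : ℕ} (A : Matrix (Fin m) (Fin n) ℝ) :
    ∃ C : ℝ, 0 ≤ C ∧ ∀ v, vnorm (A.mulVec v) ≤ C * vnorm v := by
  set T := LinearMap.toContinuousLinearMap (Matrix.toEuclideanLin A)
  refine ⟨‖T‖, norm_nonneg _, fun v => ?_⟩
  have h := T.le_opNorm ((WithLp.equiv 2 (Fin n → ℝ)).symm v)
  have hT : T ((WithLp.equiv 2 (Fin n → ℝ)).symm v) =
      (WithLp.equiv 2 (Fin m → ℝ)).symm (A.mulVec v) := by
    simp [T, Matrix.toEuclideanLin_apply, LinearMap.coe_toContinuousLinearMap']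
  rw [hT] at h
  rw [vnorm_eq, vnorm_eq]
  exact h

def svalSet {m n : ℕ} (A : Matrix (Fin m) (Fin n) ℝ) (j : ℕ) : Set ℝ :=
  {c : ℝ | 0 ≤ c ∧ ∃ W : Submodule ℝ (Fin n → ℝ), Module.finrank ℝ W = j ∧
    ∀ v ∈ W, c * vnorm v ≤ vnorm (A.mulVec v)}

lemma sval_eq {m n : ℕ} (A : Matrix (Fin m) (Fin n) ℝ) (j : ℕ) :
    sval A j = sSup (svalSet A j) := rfl

lemma svalSet_bddAbove {m n : ℕ} (A : Matrix (Fin m) (Fin n) ℝ) {j : ℕ} (hj : j ≠ 0) :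
    BddAbove (svalSet A j) := by
  obtain ⟨C, hC0, hC⟩ := opBound_spec A
  refine ⟨C, fun c hc => ?_⟩
  obtain ⟨hc0, W, hW, hWc⟩ := hc
  have hWbot : W ≠ ⊥ := by
    intro h
    rw [h] at hW
    simp [finrank_bot] at hW
    exact hj hW.symm
  obtain ⟨v, hvW, hv0⟩ := Submodule.exists_mem_ne_zero_of_ne_bot hWbot
  have h1 := hWc v hvW
  have h2 := hC v
  have := h1.trans h2
  exact le_of_mul_le_mul_right this (vnorm_pos hv0)

lemma zero_mem_svalSet_one {m n : ℕ} (hn : n ≠ 0) (A : Matrix (Fin m) (Fin n) ℝ) :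
    (0 : ℝ) ∈ svalSet A 1 := by
  refine ⟨le_refl _, Submodule.span ℝ {Pi.single ⟨0, Nat.pos_of_ne_zero hn⟩ 1}, ?_, ?_⟩
  · rw [finrank_span_singleton]
    intro h
    have := congrArg vnorm h
    rw [vnorm_single] at this
    simp [vnorm] at this
  · intro v _
    simpa using vnorm_nonneg (A.mulVec v)

lemma zero_mem_svalSet_top {m n : ℕ} (A : Matrix (Fin m) (Fin n) ℝ) :
    (0 : ℝ) ∈ svalSet A n := by
  refine ⟨le_refl _, ⊤, ?_, fun v _ => by simpa using vnorm_nonneg (A.mulVec v)⟩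
  rw [finrank_top, Module.finrank_fin_fun]

lemma sval_one_nonneg {m n : ℕ} (hn : n ≠ 0) (A : Matrix (Fin m) (Fin n) ℝ) :
    0 ≤ sval A 1 :=
  le_csSup (svalSet_bddAbove A one_ne_zero) (zero_mem_svalSet_one hn A)

lemma sval_top_nonneg {m n : ℕ} (hn : n ≠ 0) (A : Matrix (Fin m) (Fin n) ℝ) :
    0 ≤ sval A n :=
  le_csSup (svalSet_bddAbove A hn) (zero_mem_svalSet_top A)

/-- lower bound on sval A 1 from a single vector -/
lemma mulVec_le_sval_one {m n : ℕ} (A : Matrix (Fin m) (Fin n) ℝ) (w : Fin n → ℝ) (hw : w ≠ 0) :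
    vnorm (A.mulVec w) ≤ sval A 1 * vnorm w := by
  have hwpos := vnorm_pos hw
  set c := vnorm (A.mulVec w) / vnorm w with hc
  have key : c * vnorm w = vnorm (A.mulVec w) := div_mul_cancel₀ _ hwpos.ne'
  have hmem : c ∈ svalSet A 1 := by
    refine ⟨div_nonneg (vnorm_nonneg _) hwpos.le, Submodule.span ℝ {w}, finrank_span_singleton hw, ?_⟩
    intro v hv
    obtain ⟨t, rfl⟩ := Submodule.mem_span_singleton.mp hv
    have hAv : A.mulVec (t • w) = t • A.mulVec w := by rw [Matrix.mulVec_smul]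
    rw [hAv, vnorm_smul, vnorm_smul]
    have h2 : c * (|t| * vnorm w) = |t| * vnorm (A.mulVec w) := by
      rw [show c * (|t| * vnorm w) = |t| * (c * vnorm w) by ring, key]
    exact h2.le
  have hle : c ≤ sval A 1 := le_csSup (svalSet_bddAbove A one_ne_zero) hmem
  calc vnorm (A.mulVec w) = c * vnorm w := key.symm
  _ ≤ sval A 1 * vnorm w := by gcongr

/-- upper bound: sval A 1 ≤ M if gain bounded by M -/
lemma sval_one_le {m n : ℕ} (hn : n ≠ 0) (A : Matrix (Fin m) (Fin n) ℝ) {M : ℝ}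
    (hM : ∀ v, vnorm (A.mulVec v) ≤ M * vnorm v) : sval A 1 ≤ M := by
  refine csSup_le ⟨0, zero_mem_svalSet_one hn A⟩ ?_
  rintro c ⟨hc0, W, hW, hWc⟩
  have hWbot : W ≠ ⊥ := by
    intro h; rw [h] at hW; simp [finrank_bot] at hW
  obtain ⟨v, hvW, hv0⟩ := Submodule.exists_mem_ne_zero_of_ne_bot hWbot
  exact le_of_mul_le_mul_right ((hWc v hvW).trans (hM v)) (vnorm_pos hv0)

/-- sval A n is a lower bound on the gain -/
lemma sval_top_mul_le {m n : ℕ} (A : Matrix (Fin m) (Fin n) ℝ) (w : Fin n → ℝ) :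
    sval A n * vnorm w ≤ vnorm (A.mulVec w) := by
  by_cases hw : w = 0
  · subst hw
    simp [Matrix.mulVec_zero]
    have : vnorm (0 : Fin n → ℝ) = 0 := by simp [vnorm]
    rw [this, mul_zero]
    exact vnorm_nonneg _
  · have hwpos := vnorm_pos hw
    rw [← le_div_iff₀ hwpos]
    refine csSup_le ⟨0, zero_mem_svalSet_top A⟩ ?_
    rintro c ⟨hc0, W, hW, hWc⟩
    have hWtop : W = ⊤ := by
      apply Submodule.eq_top_of_finrank_eq
      rw [hW, Module.finrank_fin_fun]
    have := hWc w (hWtop ▸ Submodule.mem_top)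
    rw [le_div_iff₀ hwpos]
    exact this

/-- if c is a uniform lower bound on gain, then c ≤ sval A n -/
lemma le_sval_top {m n : ℕ} (hn : n ≠ 0) (A : Matrix (Fin m) (Fin n) ℝ) {c : ℝ} (hc0 : 0 ≤ c)
    (hc : ∀ v, c * vnorm v ≤ vnorm (A.mulVec v)) : c ≤ sval A n :=
  le_csSup (svalSet_bddAbove A hn) ⟨hc0, ⊤, by rw [finrank_top, Module.finrank_fin_fun], fun v _ => hc v⟩

lemma vnorm_mul_le {n : ℕ} (d : Fin n → ℝ) (t : ℝ) (ht0 : 0 ≤ t) (ht : ∀ j, |d j| ≤ t)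
    (u : Fin n → ℝ) : vnorm (fun j => d j * u j) ≤ t * vnorm u := by
  have h1 : ∑ j, (d j * u j) ^ 2 ≤ ∑ j, (t * u j) ^ 2 := by
    apply Finset.sum_le_sum
    intro j _
    rw [mul_pow, mul_pow]
    apply mul_le_mul_of_nonneg_right _ (sq_nonneg _)
    calc (d j) ^ 2 = |d j| ^ 2 := (sq_abs _).symm
    _ ≤ t ^ 2 := pow_le_pow_left₀ (abs_nonneg _) (ht j) 2
  have h2 : vnorm (fun j => d j * u j) ≤ vnorm (fun j => t * u j) := Real.sqrt_le_sqrt h1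
  have h3 : vnorm (fun j => t * u j) = t * vnorm u := by
    have : (fun j => t * u j) = t • u := rfl
    rw [this, vnorm_smul, abs_of_nonneg ht0]
  rw [h3] at h2
  exact h2

lemma le_vnorm_mul {n : ℕ} (d : Fin n → ℝ) (s : ℝ) (hs0 : 0 ≤ s) (hs : ∀ j, s ≤ |d j|)
    (u : Fin n → ℝ) : s * vnorm u ≤ vnorm (fun j => d j * u j) := by
  have h1 : ∑ j, (s * u j) ^ 2 ≤ ∑ j, (d j * u j) ^ 2 := by
    apply Finset.sum_le_sum
    intro j _
    rw [mul_pow, mul_pow]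
    apply mul_le_mul_of_nonneg_right _ (sq_nonneg _)
    calc s ^ 2 ≤ |d j| ^ 2 := pow_le_pow_left₀ hs0 (hs j) 2
    _ = (d j) ^ 2 := sq_abs _
  have h2 : vnorm (fun j => s * u j) ≤ vnorm (fun j => d j * u j) := Real.sqrt_le_sqrt h1
  have h3 : vnorm (fun j => s * u j) = s * vnorm u := by
    have : (fun j => s * u j) = s • u := rfl
    rw [this, vnorm_smul, abs_of_nonneg hs0]
  rw [h3] at h2
  exact h2

lemma mulVec_le_sval_one' {m n : ℕ} (hn : n ≠ 0) (A : Matrix (Fin m) (Fin n) ℝ) :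
    ∀ w, vnorm (A.mulVec w) ≤ sval A 1 * vnorm w := by
  intro w
  by_cases hw : w = 0
  · subst hw
    simp [vnorm, Matrix.mulVec_zero]
  · exact mulVec_le_sval_one A w hw

/-- placeholder -/
theorem stmt_14 {k : ℕ} (V : Matrix (Fin k) (Fin k) ℝ) (hV : IsUnit V)
    (R : Matrix (Fin k) (Fin k) ℝ)
    (hR : ∀ i j, R i j = V i j / vnorm (fun a => V a j)) :
    sval R 1 ≤ sval V 1 / sval V k ∧
    sval R⁻¹ 1 ≤ sval V 1 / sval V k ∧
    sval R 1 / sval R k ≤ (sval V 1 / sval V k) ^ 2 := by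
  obtain rfl | hk := Nat.eq_zero_or_pos k
  · -- degenerate case k = 0
    have hone : ∀ A : Matrix (Fin 0) (Fin 0) ℝ, sval A 1 = 0 := by
      intro A
      have hempty : svalSet A 1 = ∅ := by
        ext x
        simp only [svalSet, Set.mem_setOf_eq, Set.mem_empty_iff_false, iff_false, not_and]
        rintro - ⟨W, hW, -⟩
        have h1 : Module.finrank ℝ W ≤ 0 := by
          have := Submodule.finrank_le W
          rwa [Module.finrank_fin_fun] at this
        omega
      rw [sval_eq, hempty, Real.sSup_empty]
    have hzero : ∀ A : Matrix (Fin 0) (Fin 0) ℝ, sval A 0 = 0 := by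
      intro A
      have hIci : svalSet A 0 = Set.Ici 0 := by
        ext x
        constructor
        · rintro ⟨h, -⟩; exact h
        · intro h
          refine ⟨h, ⊥, finrank_bot ℝ _, fun v _ => ?_⟩
          have hv : vnorm v = 0 := by simp [vnorm]
          have hv2 : vnorm (A.mulVec v) = 0 := by simp [vnorm]
          rw [hv, hv2, mul_zero]
      rw [sval_eq, hIci, Real.sSup_of_not_bddAbove (not_bddAbove_Ici 0)]
    refine ⟨?_, ?_, ?_⟩
    · rw [hone R, hone V, hzero V]; norm_num
    · rw [hone R⁻¹, hone V, hzero V]; norm_num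
    · rw [hone R, hone V, hzero V, hzero R]; norm_num
  · have hn : k ≠ 0 := hk.ne'
    set nc : Fin k → ℝ := fun j => vnorm (fun a => V a j) with hnc
    have hcol : ∀ j, V.mulVec (Pi.single j 1) = fun a => V a j := by
      intro j
      rw [Matrix.mulVec_single]
      funext a
      simp
    have hsingle_ne : ∀ j : Fin k, (Pi.single j 1 : Fin k → ℝ) ≠ 0 := by
      intro j h
      have := congrFun h j
      rw [Pi.single_eq_same] at this
      exact one_ne_zero this
    have hdet : IsUnit V.det := (Matrix.isUnit_iff_isUnit_det V).mp hV
    have hVVinv : V * V⁻¹ = 1 := Matrix.mul_nonsing_inv V hdet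
    have hVinvV : V⁻¹ * V = 1 := Matrix.nonsing_inv_mul V hdet
    have hub : ∀ j, nc j ≤ sval V 1 := by
      intro j
      have := mulVec_le_sval_one V (Pi.single j 1) (hsingle_ne j)
      rwa [hcol, vnorm_single, mul_one] at this
    have hlb : ∀ j, sval V k ≤ nc j := by
      intro j
      have := sval_top_mul_le V (Pi.single j 1)
      rwa [hcol, vnorm_single, mul_one] at this
    -- positivity of sval V k
    obtain ⟨B, hB0, hB⟩ := opBound_spec V⁻¹
    have key : ∀ v, vnorm v ≤ B * vnorm (V.mulVec v) := by
      intro v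
      have h := hB (V.mulVec v)
      rwa [Matrix.mulVec_mulVec, hVinvV, Matrix.one_mulVec] at h
    have hj0 : (0 : ℕ) < k := hk
    have h1B : (1 : ℝ) ≤ B * nc ⟨0, hj0⟩ := by
      have := key (Pi.single ⟨0, hj0⟩ 1)
      rwa [hcol, vnorm_single] at this
    have hBpos : 0 < B := by
      rcases lt_or_ge 0 B with h | h
      · exact h
      · exfalso
        have : B * nc ⟨0, hj0⟩ ≤ 0 := mul_nonpos_of_nonpos_of_nonneg h (vnorm_nonneg _)
        linarith
    have hσk_pos : 0 < sval V k := by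
      have hmem : B⁻¹ ≤ sval V k := by
        apply le_sval_top hn V (inv_nonneg.mpr hB0)
        intro v
        rw [inv_mul_eq_div, div_le_iff₀ hBpos, mul_comm]
        exact key v
      exact lt_of_lt_of_le (inv_pos.mpr hBpos) hmem
    have hσ1_pos : 0 < sval V 1 := lt_of_lt_of_le hσk_pos ((hlb ⟨0, hj0⟩).trans (hub ⟨0, hj0⟩))
    have hnc_pos : ∀ j, 0 < nc j := fun j => lt_of_lt_of_le hσk_pos (hlb j)
    -- rewriting R.mulVec
    have hRv : ∀ v, R.mulVec v = V.mulVec (fun j => (nc j)⁻¹ * v j) := by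
      intro v
      funext i
      simp only [Matrix.mulVec, dotProduct]
      apply Finset.sum_congr rfl
      intro j _
      show R i j * v j = V i j * ((nc j)⁻¹ * v j)
      rw [hR]
      ring
    have hw_ub : ∀ v : Fin k → ℝ,
        vnorm (fun j => (nc j)⁻¹ * v j) ≤ (sval V k)⁻¹ * vnorm v := by
      intro v
      apply vnorm_mul_le _ _ (inv_nonneg.mpr hσk_pos.le)
      intro j
      rw [abs_of_nonneg (inv_nonneg.mpr (hnc_pos j).le)]
      exact inv_anti₀ hσk_pos (hlb j)
    have hw_lb : ∀ v : Fin k → ℝ,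
        (sval V 1)⁻¹ * vnorm v ≤ vnorm (fun j => (nc j)⁻¹ * v j) := by
      intro v
      apply le_vnorm_mul _ _ (inv_nonneg.mpr hσ1_pos.le)
      intro j
      rw [abs_of_nonneg (inv_nonneg.mpr (hnc_pos j).le)]
      exact inv_anti₀ (hnc_pos j) (hub j)
    have part1 : sval R 1 ≤ sval V 1 / sval V k := by
      apply sval_one_le hn R
      intro v
      calc vnorm (R.mulVec v) = vnorm (V.mulVec (fun j => (nc j)⁻¹ * v j)) := by rw [hRv]
      _ ≤ sval V 1 * vnorm (fun j => (nc j)⁻¹ * v j) := mulVec_le_sval_one' hn V _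
      _ ≤ sval V 1 * ((sval V k)⁻¹ * vnorm v) := by
          exact mul_le_mul_of_nonneg_left (hw_ub v) hσ1_pos.le
      _ = sval V 1 / sval V k * vnorm v := by rw [div_eq_mul_inv]; ring
    have part3lb : sval V k / sval V 1 ≤ sval R k := by
      apply le_sval_top hn R (div_nonneg hσk_pos.le hσ1_pos.le)
      intro v
      calc sval V k / sval V 1 * vnorm v = sval V k * ((sval V 1)⁻¹ * vnorm v) := by
            rw [div_eq_mul_inv]; ring
      _ ≤ sval V k * vnorm (fun j => (nc j)⁻¹ * v j) :=
          mul_le_mul_of_nonneg_left (hw_lb v) hσk_pos.le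
      _ ≤ vnorm (V.mulVec (fun j => (nc j)⁻¹ * v j)) := sval_top_mul_le V _
      _ = vnorm (R.mulVec v) := by rw [hRv]
    -- inverse of R
    have hRmat : R = V * Matrix.diagonal (fun j => (nc j)⁻¹) := by
      ext i j
      rw [Matrix.mul_diagonal, hR, div_eq_mul_inv]
    have hprod : R * (Matrix.diagonal nc * V⁻¹) = 1 := by
      rw [hRmat, Matrix.mul_assoc, ← Matrix.mul_assoc (Matrix.diagonal _),
        Matrix.diagonal_mul_diagonal]
      have hone : (fun j => (nc j)⁻¹ * nc j) = fun _ => (1 : ℝ) :=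
        funext fun j => inv_mul_cancel₀ (hnc_pos j).ne'
      rw [hone, Matrix.diagonal_one, Matrix.one_mul, hVVinv]
    have hRinv : R⁻¹ = Matrix.diagonal nc * V⁻¹ := Matrix.inv_eq_right_inv hprod
    have hRinvv : ∀ v, R⁻¹.mulVec v = fun j => nc j * (V⁻¹.mulVec v) j := by
      intro v
      rw [hRinv, ← Matrix.mulVec_mulVec]
      funext j
      rw [Matrix.mulVec_diagonal]
    have part2 : sval R⁻¹ 1 ≤ sval V 1 / sval V k := by
      apply sval_one_le hn R⁻¹
      intro v
      have hu : sval V k * vnorm (V⁻¹.mulVec v) ≤ vnorm v := by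
        have := sval_top_mul_le V (V⁻¹.mulVec v)
        rwa [Matrix.mulVec_mulVec, hVVinv, Matrix.one_mulVec] at this
      have hu2 : vnorm (V⁻¹.mulVec v) ≤ (sval V k)⁻¹ * vnorm v := by
        rw [inv_mul_eq_div, le_div_iff₀ hσk_pos, mul_comm]
        exact hu
      calc vnorm (R⁻¹.mulVec v) = vnorm (fun j => nc j * (V⁻¹.mulVec v) j) := by rw [hRinvv]
      _ ≤ sval V 1 * vnorm (V⁻¹.mulVec v) := by
          apply vnorm_mul_le _ _ hσ1_pos.le
          intro j
          rw [abs_of_nonneg (hnc_pos j).le]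
          exact hub j
      _ ≤ sval V 1 * ((sval V k)⁻¹ * vnorm v) := mul_le_mul_of_nonneg_left hu2 hσ1_pos.le
      _ = sval V 1 / sval V k * vnorm v := by rw [div_eq_mul_inv]; ring
    refine ⟨part1, part2, ?_⟩
    have hR1_nonneg : 0 ≤ sval R 1 := sval_one_nonneg hn R
    have hRk_pos : 0 < sval R k := lt_of_lt_of_le (div_pos hσk_pos hσ1_pos) part3lb
    calc sval R 1 / sval R k ≤ (sval V 1 / sval V k) / (sval V k / sval V 1) :=
        div_le_div₀ (div_nonneg hσ1_pos.le hσk_pos.le) part1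
          (div_pos hσk_pos hσ1_pos) part3lb
    _ = (sval V 1 / sval V k) ^ 2 := by
        field_simp
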